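/- Every w-bubble u such that d_w divides w·u satisfies w·u ≤ (n−2)·d_w. -/

import Mathlib

/-- The weighted dot product `w · u = ∑ i, w i * u i`. -/
def dotW {n : ℕ} (w u : Fin n → ℕ) : ℕ := ∑ i, w i * u i

/-- `d_w`, the least common multiple of the weights. -/
def lcmW {n : ℕ} (w : Fin n → ℕ) : ℕ := Finset.univ.lcm w

/-- `u` is a `w`-bubble: `w · u ≥ 2 d_w` and there is no `v ⪯ u` with `w · v = d_w`. -/
def IsBubble {n : ℕ} (w u : Fin n → ℕ) : Prop :=
  2 * lcmW w ≤ dotW w u ∧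
    ¬ ∃ v : Fin n → ℕ, (∀ i, v i ≤ u i) ∧ dotW w v = lcmW w

private lemma sum_one_point {n : ℕ} (w : Fin n → ℕ) (j : Fin n) (a : ℕ) :
    ∑ i, w i * (if i = j then a else 0) = w j * a := by
  have h : ∀ i : Fin n, w i * (if i = j then a else 0) = (if i = j then w j * a else 0) := by
    intro i
    by_cases h1 : i = j
    · subst h1; simp
    · simp [h1]
  rw [Finset.sum_congr rfl fun i _ => h i]
  simp

private lemma sum_two_point {n : ℕ} (w : Fin n → ℕ) {j k : Fin n} (hjk : j ≠ k) (a b : ℕ) :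
    ∑ i, w i * (if i = j then a else if i = k then b else 0) = w j * a + w k * b := by
  have h : ∀ i : Fin n, w i * (if i = j then a else if i = k then b else 0)
      = (if i = j then w j * a else 0) + (if i = k then w k * b else 0) := by
    intro i
    by_cases h1 : i = j
    · subst h1; simp [hjk]
    · by_cases h2 : i = k
      · subst h2; simp [h1]
      · simp [h1, h2]
  rw [Finset.sum_congr rfl fun i _ => h i, Finset.sum_add_distrib]
  simp

private lemma pow_dvd_lcm_cases {a b : ℕ} (ha : a ≠ 0) (hb : b ≠ 0) {p j : ℕ} (hp : p.Prime)
    (h : p ^ j ∣ Nat.lcm a b) : p ^ j ∣ a ∨ p ^ j ∣ b := by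
  have hl : Nat.lcm a b ≠ 0 := Nat.lcm_ne_zero ha hb
  rw [Nat.Prime.pow_dvd_iff_le_factorization hp hl, Nat.factorization_lcm ha hb,
    Finsupp.sup_apply] at h
  rcases le_total (a.factorization p) (b.factorization p) with hc | hc
  · right
    rw [Nat.Prime.pow_dvd_iff_le_factorization hp hb]
    omega
  · left
    rw [Nat.Prime.pow_dvd_iff_le_factorization hp ha]
    omega

private lemma dvd_of_forall_prime_pow {L x : ℕ} (hL : L ≠ 0) (hx : x ≠ 0)
    (h : ∀ p j : ℕ, p.Prime → p ^ j ∣ L → p ^ j ∣ x) : L ∣ x := by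
  rw [← Nat.factorization_le_iff_dvd hL hx, Finsupp.le_def]
  intro p
  by_cases hp : p.Prime
  · have h1 : p ^ L.factorization p ∣ L := Nat.ordProj_dvd L p
    have h2 := h p (L.factorization p) hp h1
    exact (Nat.Prime.pow_dvd_iff_le_factorization hp hx).mp h2
  · simp [Nat.factorization_eq_zero_of_not_prime _ hp]

private lemma exists_rep {n : ℕ} (hn : 3 ≤ n) (w u x : Fin n → ℕ) (d : ℕ) (hd0 : 0 < d)
    (hw : ∀ i, 0 < w i) (hwd : ∀ i, w i ∣ d)
    (hwx : ∀ i, w i ∣ x i) (hxpos : ∀ i, 0 < x i)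
    (hcx : ∀ i, x i + w i * u i = d)
    (hxsum : ∑ i, x i = d) :
    ∃ v : Fin n → ℕ, (∀ i, v i ≤ u i) ∧ ∑ i, w i * v i = d := by
  by_contra hno
  push_neg at hno
  -- Two-coordinate strategy: j gets m, k gets d - m.
  have hC : ∀ j k : Fin n, j ≠ k → ∀ m : ℕ, w j ∣ m → w k ∣ m → x k ≤ m →
      m + x j ≤ d → False := by
    intro j k hjk m hjm hkm hxk hm
    have hdm : w k ∣ d - m := Nat.dvd_sub (hwd k) hkm
    have hsum : ∑ i, w i * (if i = j then m / w j else if i = k then (d - m) / w k else 0)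
        = d := by
      rw [sum_two_point w hjk, Nat.mul_div_cancel' hjm, Nat.mul_div_cancel' hdm]
      have := hxpos j
      omega
    apply hno (fun i => if i = j then m / w j else if i = k then (d - m) / w k else 0) _ hsum
    intro i
    by_cases h1 : i = j
    · subst h1
      simp only [if_pos rfl]
      have h2 : m ≤ w i * u i := by have := hcx i; omega
      have h3 : m / w i ≤ (w i * u i) / w i := Nat.div_le_div_right h2
      rwa [Nat.mul_div_cancel_left _ (hw i)] at h3
    · by_cases h2 : i = k
      · subst h2
        simp only [if_neg h1, if_pos rfl]
        have h4 : d - m ≤ w i * u i := by have := hcx i; omega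
        have h5 : (d - m) / w i ≤ (w i * u i) / w i := Nat.div_le_div_right h4
        rwa [Nat.mul_div_cancel_left _ (hw i)] at h5
      · simp [h1, h2]
  -- Strategy A: if all deficits are small, take v i = x i / w i.
  have hA : ∃ ks : Fin n, d < 2 * x ks := by
    by_contra hA
    push_neg at hA
    apply hno (fun i => x i / w i)
    · intro i
      have h1 : x i ≤ w i * u i := by have := hcx i; have := hA i; omega
      have h2 : x i / w i ≤ (w i * u i) / w i := Nat.div_le_div_right h1
      rwa [Nat.mul_div_cancel_left _ (hw i)] at h2
    · calc ∑ i, w i * (x i / w i) = ∑ i, x i := by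
            refine Finset.sum_congr rfl fun i _ => ?_
            exact Nat.mul_div_cancel' (hwx i)
        _ = d := hxsum
  obtain ⟨ks, hks⟩ := hA
  obtain ⟨i0, -, hmin⟩ := Finset.exists_min_image (Finset.univ : Finset (Fin n)) x
    ⟨ks, Finset.mem_univ ks⟩
  have hmin : ∀ k, x i0 ≤ x k := fun k => hmin k (Finset.mem_univ k)
  -- pairs and triples bounds
  have hpair : ∀ p q : Fin n, p ≠ q → x p + x q ≤ d := by
    intro p q hpq
    have h2 := Finset.sum_le_sum_of_subset (Finset.subset_univ ({p, q} : Finset (Fin n)))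
      (f := x)
    rw [Finset.sum_pair hpq, hxsum] at h2
    exact h2
  -- two distinct elements different from i0
  have hcard : 1 < (Finset.univ.erase i0).card := by
    rw [Finset.card_erase_of_mem (Finset.mem_univ _), Finset.card_univ, Fintype.card_fin]
    omega
  obtain ⟨a, ha, b, hb, hab⟩ := Finset.one_lt_card.mp hcard
  have hai0 : a ≠ i0 := (Finset.mem_erase.mp ha).1
  have hbi0 : b ≠ i0 := (Finset.mem_erase.mp hb).1
  have htri : x i0 + x a + x b ≤ d := by
    have hsub : ({i0, a, b} : Finset (Fin n)) ⊆ Finset.univ := Finset.subset_univ _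
    have h2 := Finset.sum_le_sum_of_subset hsub (f := x)
    rw [hxsum] at h2
    rw [Finset.sum_insert (by simp [Ne.symm hai0, Ne.symm hbi0]),
      Finset.sum_pair hab] at h2
    omega
  have h3x : 3 * x i0 ≤ d := by
    have := hmin a; have := hmin b; omega
  have hks2 : i0 ≠ ks := by
    intro h
    rw [h] at h3x
    omega
  have hmid2 : ∀ k, k ≠ i0 → k ≠ ks → 2 * x k ≤ d := by
    intro k _ hk2
    by_contra h
    push_neg at h
    have := hpair k ks hk2
    omega
  -- For middle coordinates the lcm with w i0 is d.
  have hlcm_mid : ∀ k, k ≠ i0 → k ≠ ks → Nat.lcm (w i0) (w k) = d := by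
    intro k hk1 hk2
    have hLdvd : Nat.lcm (w i0) (w k) ∣ d := Nat.lcm_dvd (hwd i0) (hwd k)
    set L := Nat.lcm (w i0) (w k) with hLdef
    obtain ⟨q, hq⟩ := hLdvd
    have hL0 : 0 < L :=
      Nat.pos_of_ne_zero (Nat.lcm_ne_zero (hw i0).ne' (hw k).ne')
    have hq1 : q ≠ 0 := by rintro rfl; omega
    rcases Nat.lt_or_ge q 2 with hq2 | hq2
    · have hq3 : q = 1 := by omega
      rw [hq3, mul_one] at hq
      omega
    · exfalso
      rcases Nat.even_or_odd q with ⟨r, hr⟩ | ⟨r, hr⟩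
      · -- even: q = r + r
        have hm : d = 2 * (L * r) := by rw [hq, hr]; ring
        refine hC i0 k (Ne.symm hk1) (L * r) ?_ ?_ ?_ ?_
        · exact (Nat.dvd_lcm_left _ _).trans (dvd_mul_right _ _)
        · exact (Nat.dvd_lcm_right _ _).trans (dvd_mul_right _ _)
        · have := hmid2 k hk1 hk2; omega
        · omega
      · -- odd: q = 2 * r + 1, r ≥ 1
        have hrge : 1 ≤ r := by omega
        have hLm : L ≤ L * r := Nat.le_mul_of_pos_right L (by omega)
        have hm : d = 2 * (L * r) + L := by rw [hq, hr]; ring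
        refine hC k i0 hk1 (L * r) ?_ ?_ ?_ ?_
        · exact (Nat.dvd_lcm_right _ _).trans (dvd_mul_right _ _)
        · exact (Nat.dvd_lcm_left _ _).trans (dvd_mul_right _ _)
        · omega
        · have := hmid2 k hk1 hk2; omega
  -- pair (i0, ks): high window failure
  have hL0dvd : Nat.lcm (w i0) (w ks) ∣ d := Nat.lcm_dvd (hwd i0) (hwd ks)
  set L0 := Nat.lcm (w i0) (w ks) with hL0def
  have hL0pos : 0 < L0 :=
    Nat.pos_of_ne_zero (Nat.lcm_ne_zero (hw i0).ne' (hw ks).ne')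
  set m1 := L0 * ((d - x i0) / L0) with hm1def
  have hm1le : m1 ≤ d - x i0 := by
    rw [hm1def, mul_comm]
    exact Nat.div_mul_le_self _ _
  have hm1x : m1 < x ks := by
    by_contra h
    push_neg at h
    refine hC i0 ks hks2 m1 ?_ ?_ h ?_
    · exact (Nat.dvd_lcm_left _ _).trans (dvd_mul_right _ _)
    · exact (Nat.dvd_lcm_right _ _).trans (dvd_mul_right _ _)
    · have := hxpos i0; omega
  have hlt : d - x i0 < m1 + L0 := by
    have hdm := Nat.div_add_mod (d - x i0) L0
    have hmod := Nat.mod_lt (d - x i0) hL0pos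
    omega
  -- split the sum
  have hksmem : ks ∈ Finset.univ.erase i0 :=
    Finset.mem_erase.mpr ⟨Ne.symm hks2, Finset.mem_univ ks⟩
  have h1 := Finset.add_sum_erase Finset.univ x (Finset.mem_univ i0)
  have h2 := Finset.add_sum_erase _ x hksmem
  set S := ∑ i ∈ (Finset.univ.erase i0).erase ks, x i with hSdef
  have hsplit : x i0 + (x ks + S) = d := by rw [h2, h1, hxsum]
  have hSL : S < L0 := by
    have := hpair i0 ks hks2
    omega
  -- L0 divides x i0
  have hdvd0 : L0 ∣ x i0 := by
    apply dvd_of_forall_prime_pow hL0pos.ne' (hxpos i0).ne'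
    intro p j hp hpj
    by_cases hwi : p ^ j ∣ w i0
    · exact hwi.trans (hwx i0)
    · have hks3 : p ^ j ∣ w ks := by
        rcases pow_dvd_lcm_cases (hw i0).ne' (hw ks).ne' hp hpj with h | h
        · exact absurd h hwi
        · exact h
      have hdd : p ^ j ∣ d := hpj.trans hL0dvd
      have hmids : p ^ j ∣ S := by
        apply Finset.dvd_sum
        intro k hkmem
        have hk1 : k ≠ ks := (Finset.mem_erase.mp hkmem).1
        have hk2 : k ≠ i0 := (Finset.mem_erase.mp (Finset.mem_erase.mp hkmem).2).1
        have hlk : p ^ j ∣ Nat.lcm (w i0) (w k) := by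
          rw [hlcm_mid k hk2 hk1]; exact hdd
        rcases pow_dvd_lcm_cases (hw i0).ne' (hw k).ne' hp hlk with h | h
        · exact absurd h hwi
        · exact h.trans (hwx k)
      have hrest : p ^ j ∣ x ks + S := dvd_add (hks3.trans (hwx ks)) hmids
      have hsub := Nat.dvd_sub hdd hrest
      have heq : d - (x ks + S) = x i0 := by omega
      rwa [heq] at hsub
  have hle1 : L0 ≤ x i0 := Nat.le_of_dvd (hxpos i0) hdvd0
  -- but x i0 ≤ S < L0
  have hTne : ((Finset.univ.erase i0).erase ks).Nonempty := by
    apply Finset.card_pos.mp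
    rw [Finset.card_erase_of_mem hksmem, Finset.card_erase_of_mem (Finset.mem_univ i0),
      Finset.card_univ, Fintype.card_fin]
    omega
  obtain ⟨mid, hmid⟩ := hTne
  have hxS : x i0 ≤ S := by
    have hsingle := Finset.single_le_sum (f := x) (fun i _ => Nat.zero_le _) hmid
    exact le_trans (hmin mid) (by rw [hSdef]; exact hsingle)
  omega

theorem bubble_dot_le_of_dvd {n : ℕ} (hn : 0 < n) (w : Fin n → ℕ) (hw : ∀ i, 0 < w i)
    (u : Fin n → ℕ) (hu : IsBubble w u) (hdvd : lcmW w ∣ dotW w u) :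
    (dotW w u : ℤ) ≤ ((n : ℤ) - 2) * (lcmW w : ℤ) := by
  obtain ⟨hge, hnov⟩ := hu
  set d := lcmW w with hd
  have hwd : ∀ i, w i ∣ d := fun i => Finset.dvd_lcm (Finset.mem_univ i)
  have hd0 : 0 < d := by
    rw [Nat.pos_iff_ne_zero]
    intro h
    rw [hd, lcmW, Finset.lcm_eq_zero_iff] at h
    obtain ⟨i, -, hi⟩ := h
    exact (hw i).ne' hi
  have hcap : ∀ i, w i * u i < d := by
    intro i
    by_contra hcap
    push_neg at hcap
    apply hnov
    refine ⟨fun j => if j = i then d / w i else 0, ?_, ?_⟩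
    · intro j
      by_cases h : j = i
      · subst h
        simp only [if_pos rfl]
        have h3 : d / w j ≤ (w j * u j) / w j := Nat.div_le_div_right hcap
        rwa [Nat.mul_div_cancel_left _ (hw j)] at h3
      · simp [h]
    · rw [dotW, sum_one_point w i (d / w i)]
      exact Nat.mul_div_cancel' (hwd i)
  obtain ⟨K, hK⟩ := hdvd
  have hK2 : 2 ≤ K := by
    rw [hK] at hge
    have : d * 2 ≤ d * K := by omega
    exact Nat.le_of_mul_le_mul_left this hd0
  have hKn : K < n := by
    by_contra hcon
    push_neg at hcon
    have hne : (Finset.univ : Finset (Fin n)).Nonempty := ⟨⟨0, hn⟩, Finset.mem_univ _⟩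
    have hlt : ∑ i, w i * u i < ∑ _i : Fin n, d :=
      Finset.sum_lt_sum_of_nonempty hne (fun i _ => hcap i)
    rw [Finset.sum_const, Finset.card_univ, Fintype.card_fin, smul_eq_mul] at hlt
    rw [dotW] at hK
    have h5 : d * n ≤ d * K := Nat.mul_le_mul_left d hcon
    have h6 : d * n = n * d := Nat.mul_comm _ _
    omega
  rcases Nat.lt_or_ge (K + 1) n with hcase | hcase
  · -- K ≤ n - 2: done
    rw [hK]
    push_cast
    have hdz : (0 : ℤ) ≤ (d : ℤ) := by positivity
    have hcase2 : K + 2 ≤ n := by omega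
    have hKz : (K : ℤ) + 2 ≤ (n : ℤ) := by exact_mod_cast hcase2
    nlinarith
  · -- K = n - 1 : derive contradiction
    exfalso
    have hKeq : n = K + 1 := by omega
    have hn3 : 3 ≤ n := by omega
    set x : Fin n → ℕ := fun i => d - w i * u i with hx
    have hcx : ∀ i, x i + w i * u i = d := by
      intro i; have := hcap i; simp only [hx]; omega
    have hxpos : ∀ i, 0 < x i := by
      intro i; have := hcap i; simp only [hx]; omega
    have hwx : ∀ i, w i ∣ x i := by
      intro i
      exact Nat.dvd_sub (hwd i) (dvd_mul_right (w i) (u i))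
    have hxsum : ∑ i, x i = d := by
      have h1 : ∑ i, x i + ∑ i, w i * u i = ∑ i, (x i + w i * u i) :=
        (Finset.sum_add_distrib).symm
      have h2 : ∑ i, (x i + w i * u i) = n * d := by
        rw [Finset.sum_congr rfl fun i _ => hcx i, Finset.sum_const, Finset.card_univ,
          Fintype.card_fin, smul_eq_mul]
      have h3 : ∑ i, w i * u i = d * K := hK ▸ rfl
      have h4 : n * d = d * K + d := by rw [hKeq]; ring
      omega
    obtain ⟨v, hv1, hv2⟩ := exists_rep hn3 w u x d hd0 hw hwd hwx hxpos hcx hxsum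
    exact hnov ⟨v, hv1, hv2⟩
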